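/- arXiv:2510.02041 — 2 statements merged into one kernel-verified Lean document; each statement's English description precedes it below -/
import Mathlib

section
/- For every positive integer M, ∑_{m=1}^{M-1} (1 − m/M) · m^{1/2} ≤ (4/15) M^{3/2}. -/
open Real intervalIntegral Set

noncomputable def gfun (M : ℕ) : ℝ → ℝ := fun x => Real.sqrt x - x ^ ((3:ℝ)/2) / M

lemma hx32 (x : ℝ) (hx : 0 ≤ x) : x ^ ((3:ℝ)/2) = x * Real.sqrt x := by
  rw [show ((3:ℝ)/2) = 1 + 1/2 by norm_num, Real.rpow_add' hx (by norm_num),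
    Real.rpow_one, Real.sqrt_eq_rpow]

lemma gcont (M : ℕ) : Continuous (gfun M) := by
  apply Real.continuous_sqrt.sub
  apply Continuous.div_const
  exact continuous_iff_continuousAt.2 fun x =>
    Real.continuousAt_rpow_const x _ (Or.inr (by norm_num))

lemma gconc (M : ℕ) : ConcaveOn ℝ (Set.Ici (0:ℝ)) (gfun M) := by
  have h1 : ConcaveOn ℝ (Set.Ici (0:ℝ)) (√· : ℝ → ℝ) := Real.strictConcaveOn_sqrt.concaveOn
  have h2 : ConvexOn ℝ (Set.Ici (0:ℝ)) (fun x : ℝ => x ^ ((3:ℝ)/2) / M) := by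
    have := (convexOn_rpow (p := (3:ℝ)/2) (by norm_num)).smul
      (c := (M:ℝ)⁻¹) (by positivity)
    convert this using 2 with x
    · rfl
    · rfl
    simp [div_eq_inv_mul]
  exact h1.sub h2

-- trapezoid estimate on [m, m+1]
lemma trap (M : ℕ) (m : ℕ) :
    (gfun M m + gfun M (m+1)) / 2 ≤ ∫ x in ((m:ℕ):ℝ)..((m+1:ℕ):ℝ), gfun M x := by
  have hint : IntervalIntegrable (gfun M) MeasureTheory.volume (m:ℝ) ((m:ℝ)+1) :=
    (gcont M).intervalIntegrable _ _
  have key : ∀ x ∈ Set.Icc (m:ℝ) ((m:ℝ)+1),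
      ((m:ℝ)+1-x) * gfun M m + (x - m) * gfun M ((m:ℝ)+1) ≤ gfun M x := by
    intro x hx
    have hxm : (m:ℝ) ∈ Set.Ici (0:ℝ) := Set.mem_Ici.mpr (by positivity)
    have hym : ((m:ℝ)+1) ∈ Set.Ici (0:ℝ) := Set.mem_Ici.mpr (by positivity)
    have ha : (0:ℝ) ≤ (m:ℝ)+1-x := by linarith [hx.2]
    have hb : (0:ℝ) ≤ x - m := by linarith [hx.1]
    have h := (gconc M).2 hxm hym ha hb (by ring)
    simp only [smul_eq_mul] at h
    calc ((m:ℝ)+1-x) * gfun M m + (x - m) * gfun M ((m:ℝ)+1) ≤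
        gfun M (((m:ℝ)+1-x) * (m:ℝ) + (x - m) * ((m:ℝ)+1)) := h
      _ = gfun M x := by congr 1; ring
  have hlin : (fun x : ℝ => ((m:ℝ)+1-x) * gfun M m + (x - m) * gfun M ((m:ℝ)+1))
      = fun x : ℝ => (gfun M ((m:ℝ)+1) - gfun M m) * x
        + (((m:ℝ)+1) * gfun M m - m * gfun M ((m:ℝ)+1)) := by
    funext x; ring
  have hilin : IntervalIntegrable
      (fun x : ℝ => ((m:ℝ)+1-x) * gfun M m + (x - m) * gfun M ((m:ℝ)+1))
      MeasureTheory.volume (m:ℝ) ((m:ℝ)+1) := by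
    apply Continuous.intervalIntegrable
    continuity
  have hmono : (∫ x in (m:ℝ)..((m:ℝ)+1), (((m:ℝ)+1-x) * gfun M m + (x - m) * gfun M ((m:ℝ)+1)))
      ≤ ∫ x in (m:ℝ)..((m:ℝ)+1), gfun M x :=
    intervalIntegral.integral_mono_on (by linarith) hilin hint key
  have hcomp : (∫ x in (m:ℝ)..((m:ℝ)+1), (((m:ℝ)+1-x) * gfun M m + (x - m) * gfun M ((m:ℝ)+1)))
      = (gfun M m + gfun M ((m:ℝ)+1)) / 2 := by
    rw [hlin]
    rw [intervalIntegral.integral_add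
        (by apply Continuous.intervalIntegrable; continuity)
        (intervalIntegrable_const),
      integral_const_mul, integral_id, integral_const, smul_eq_mul]
    ring
  have := le_trans (le_of_eq hcomp.symm) hmono
  push_cast
  exact this

theorem stmt_6 (M : ℕ) (hM : 0 < M) :
    ∑ m ∈ Finset.Ico 1 M, (1 - (m : ℝ) / M) * Real.sqrt m ≤ (4 / 15) * (M : ℝ) ^ ((3 : ℝ) / 2) := by
  have hM0 : (0:ℝ) < M := by exact_mod_cast hM
  have hg0 : gfun M 0 = 0 := by
    simp [gfun, Real.zero_rpow (by norm_num : ((3:ℝ)/2) ≠ 0)]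
  have hgM : gfun M M = 0 := by
    simp only [gfun, hx32 M (le_of_lt hM0)]
    field_simp
    ring
  have hsum_eq : ∑ m ∈ Finset.Ico 1 M, (1 - (m : ℝ) / M) * Real.sqrt m
      = ∑ m ∈ Finset.Ico 1 M, gfun M m := by
    apply Finset.sum_congr rfl
    intro m hm
    simp only [gfun, hx32 (m:ℝ) (by positivity)]
    field_simp
  have hshift : ∑ m ∈ Finset.range M, gfun M ((m:ℝ)+1)
      = ∑ m ∈ Finset.range M, gfun M (m:ℝ) + gfun M M - gfun M 0 := by
    have h := Finset.sum_range_succ' (fun m : ℕ => gfun M (m:ℝ)) M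
    rw [Finset.sum_range_succ] at h
    push_cast at h ⊢
    linarith
  have hb : ∑ m ∈ Finset.range M, gfun M (m:ℝ)
      = gfun M 0 + ∑ m ∈ Finset.Ico 1 M, gfun M (m:ℝ) := by
    rw [Finset.range_eq_Ico, Finset.sum_eq_sum_Ico_succ_bot hM]
    norm_num
  have htrap_sum : ∑ m ∈ Finset.Ico 1 M, gfun M m
      = ∑ m ∈ Finset.range M, (gfun M m + gfun M (m+1)) / 2 := by
    have h2 : ∑ m ∈ Finset.range M, (gfun M m + gfun M (m+1)) / 2
        = (∑ m ∈ Finset.range M, gfun M (m:ℝ)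
          + ∑ m ∈ Finset.range M, gfun M ((m:ℝ)+1)) / 2 := by
      rw [← Finset.sum_add_distrib, ← Finset.sum_div]
    rw [h2, hshift, hb, hg0, hgM]
    ring
  have hsum_int : ∑ m ∈ Finset.range M, (∫ x in ((m:ℕ):ℝ)..((m+1:ℕ):ℝ), gfun M x)
      = ∫ x in (0:ℝ)..(M:ℝ), gfun M x := by
    have h := intervalIntegral.sum_integral_adjacent_intervals
      (a := fun k : ℕ => (k:ℝ)) (n := M) (f := gfun M) (μ := MeasureTheory.volume)
      (fun k _ => (gcont M).intervalIntegrable _ _)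
    simpa using h
  have hval : (∫ x in (0:ℝ)..(M:ℝ), gfun M x) = (4/15) * (M:ℝ) ^ ((3:ℝ)/2) := by
    have h1 : (∫ x in (0:ℝ)..(M:ℝ), Real.sqrt x)
        = ((M:ℝ) ^ ((1:ℝ)/2 + 1) - (0:ℝ) ^ ((1:ℝ)/2 + 1)) / ((1:ℝ)/2 + 1) := by
      rw [show (fun x : ℝ => Real.sqrt x) = fun x : ℝ => x ^ ((1:ℝ)/2) from
        funext fun x => Real.sqrt_eq_rpow x]
      exact integral_rpow (Or.inl (by norm_num))
    have h2 : (∫ x in (0:ℝ)..(M:ℝ), x ^ ((3:ℝ)/2))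
        = ((M:ℝ) ^ ((3:ℝ)/2 + 1) - (0:ℝ) ^ ((3:ℝ)/2 + 1)) / ((3:ℝ)/2 + 1) :=
      integral_rpow (Or.inl (by norm_num))
    have hi1 : IntervalIntegrable (fun x : ℝ => Real.sqrt x) MeasureTheory.volume 0 (M:ℝ) :=
      Real.continuous_sqrt.intervalIntegrable _ _
    have hi2 : IntervalIntegrable (fun x : ℝ => x ^ ((3:ℝ)/2) / M) MeasureTheory.volume 0 (M:ℝ) := by
      apply Continuous.intervalIntegrable
      apply Continuous.div_const
      exact continuous_iff_continuousAt.2 fun x =>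
        Real.continuousAt_rpow_const x _ (Or.inr (by norm_num))
    have hsplit : (∫ x in (0:ℝ)..(M:ℝ), gfun M x)
        = (∫ x in (0:ℝ)..(M:ℝ), Real.sqrt x) - ∫ x in (0:ℝ)..(M:ℝ), x ^ ((3:ℝ)/2) / M :=
      intervalIntegral.integral_sub hi1 hi2
    have hdiv : (∫ x in (0:ℝ)..(M:ℝ), x ^ ((3:ℝ)/2) / M)
        = (∫ x in (0:ℝ)..(M:ℝ), x ^ ((3:ℝ)/2)) / M := intervalIntegral.integral_div _ _
    rw [hsplit, hdiv, h1, h2]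
    rw [Real.zero_rpow (by norm_num), Real.zero_rpow (by norm_num)]
    have e1 : (M:ℝ) ^ ((1:ℝ)/2 + 1) = (M:ℝ) ^ ((3:ℝ)/2) := by norm_num
    have e2 : (M:ℝ) ^ ((3:ℝ)/2 + 1) = (M:ℝ) ^ ((3:ℝ)/2) * M := by
      rw [Real.rpow_add hM0, Real.rpow_one]
    rw [e1, e2]
    field_simp
    ring
  calc ∑ m ∈ Finset.Ico 1 M, (1 - (m : ℝ) / M) * Real.sqrt m
      = ∑ m ∈ Finset.range M, (gfun M m + gfun M (m+1)) / 2 := by rw [hsum_eq, htrap_sum]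
    _ ≤ ∑ m ∈ Finset.range M, (∫ x in ((m:ℕ):ℝ)..((m+1:ℕ):ℝ), gfun M x) :=
        Finset.sum_le_sum fun m _ => trap M m
    _ = ∫ x in (0:ℝ)..(M:ℝ), gfun M x := hsum_int
    _ = (4/15) * (M:ℝ) ^ ((3:ℝ)/2) := hval
end

section
/- For t ≥ e², | ∫_t^{t²} (log x)/x^{1/2+it} dx | ≤ 2 log t + 0.921. -/
open Complex intervalIntegral

theorem aux_num (t : ℝ) (ht : Real.exp 1 * Real.exp 1 ≤ t) :
    t / t^2 + t ^ ((1:ℝ)/2) * Real.log t / t + t ^ ((1:ℝ)/2) / t^2 ≤ 0.921 := by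
  set e1 := Real.exp 1 with he1
  have el : 2.7182818283 < e1 := Real.exp_one_gt_d9
  have eu : e1 < 2.7182818286 := Real.exp_one_lt_d9
  have he0 : (0:ℝ) < e1 := by nlinarith
  have ht0 : (0:ℝ) < t := by nlinarith
  have ht1 : (1:ℝ) < t := by nlinarith
  set r := Real.sqrt t with hrr
  have hrsq : r * r = t := Real.mul_self_sqrt ht0.le
  have hre : e1 ≤ r := by
    have h := Real.sqrt_le_sqrt ht
    rwa [Real.sqrt_mul_self he0.le] at h
  have hrpow : t ^ ((1:ℝ)/2) = r := by rw [hrr, Real.sqrt_eq_rpow]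
  have hr0 : (0:ℝ) < r := lt_of_lt_of_le he0 hre
  have hlogr : Real.log r ≤ r / e1 := by
    have h := Real.log_le_sub_one_of_pos (show (0:ℝ) < r / e1 by positivity)
    rw [Real.log_div hr0.ne' he0.ne', he1, Real.log_exp] at h
    linarith
  have hlogr' : Real.log r * e1 ≤ r := (le_div_iff₀ he0).mp hlogr
  have hlogt' : Real.log t * e1 ≤ 2 * r := by
    have hlt : Real.log t = 2 * Real.log r := by
      rw [← hrsq, Real.log_mul hr0.ne' hr0.ne']; ring
    rw [hlt]; linarith
  have term1 : t / t^2 ≤ 1 / (e1 * e1) := by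
    rw [div_le_div_iff₀ (by positivity) (by positivity)]
    nlinarith
  have term2 : t ^ ((1:ℝ)/2) * Real.log t / t ≤ 2 / e1 := by
    rw [hrpow, div_le_div_iff₀ ht0 he0]
    nlinarith [mul_nonneg (sub_nonneg.2 hlogt') hr0.le, hrsq]
  have term3 : t ^ ((1:ℝ)/2) / t^2 ≤ 1 / (e1 * e1 * e1) := by
    rw [hrpow, div_le_div_iff₀ (by positivity) (by positivity)]
    have h3 : e1 * e1 * e1 ≤ r * r * r := by nlinarith
    have ht2 : t^2 = (r*r)*(r*r) := by rw [← hrsq]; ring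
    nlinarith [mul_le_mul_of_nonneg_left h3 hr0.le, ht2]
  have final : 1 / (e1 * e1) + 2 / e1 + 1 / (e1 * e1 * e1) ≤ 0.921 := by
    have hsum : 1 / (e1 * e1) + 2 / e1 + 1 / (e1 * e1 * e1)
        = (e1 + 2 * (e1 * e1) + 1) / (e1 * e1 * e1) := by field_simp
    rw [hsum, div_le_iff₀ (by positivity)]
    nlinarith [mul_nonneg (mul_nonneg (sub_nonneg.2 el.le) (sub_nonneg.2 el.le)) (sub_nonneg.2 el.le), sq_nonneg (e1 - 2.7182818283)]
  linarith

theorem stmt_15 (t : ℝ) (ht : Real.exp 2 ≤ t) :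
    ‖(∫ x in t..(t ^ 2), (Real.log x : ℂ) / (x : ℂ) ^ ((1 / 2 : ℂ) + t * Complex.I))‖ ≤
      2 * Real.log t + 0.921 := by
  set e1 := Real.exp 1 with he1
  have hee : Real.exp 2 = e1 * e1 := by rw [he1, ← Real.exp_add]; norm_num
  have el : 2.7182818283 < e1 := Real.exp_one_gt_d9
  have eu : e1 < 2.7182818286 := Real.exp_one_lt_d9
  have ht0 : (0:ℝ) < t := by nlinarith
  have ht1 : (1:ℝ) < t := by nlinarith
  have htt : t ≤ t ^ 2 := by nlinarith
  set s : ℂ := (1/2 : ℂ) + t * Complex.I with hs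
  have him : (-s + 1).im = -t := by simp [hs]
  have hs1 : -s + 1 ≠ 0 := by
    intro h
    rw [h] at him
    simp at him
    nlinarith
  have hrne : -s ≠ -1 := by
    intro h
    apply hs1
    rw [h]; ring
  set F : ℝ → ℂ := fun y => (y:ℂ) ^ (-s+1) / (-s+1) * (Real.log y : ℂ)
      - ((y:ℂ) ^ (-s+1) / (-s+1)) / (-s+1) with hF
  have hder : ∀ x ∈ Set.uIcc t (t^2), HasDerivAt F ((Real.log x : ℂ) / (x:ℂ) ^ s) x := by
    intro x hx
    rw [Set.uIcc_of_le htt] at hx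
    have hx0 : (0:ℝ) < x := lt_of_lt_of_le ht0 hx.1
    have hxc : (x:ℂ) ≠ 0 := Complex.ofReal_ne_zero.2 hx0.ne'
    have h1 := hasDerivAt_ofReal_cpow_const' hx0.ne' hrne
    have h2 : HasDerivAt (fun y:ℝ => ((Real.log y : ℝ) : ℂ)) ((x⁻¹ : ℝ) : ℂ) x :=
      (Real.hasDerivAt_log hx0.ne').ofReal_comp
    have h3 := (h1.mul h2).sub (h1.div_const (-s+1))
    convert h3 using 1
    · rfl
    · rfl
    have hsplit : (x:ℂ) ^ (-s+1) = (x:ℂ) ^ (-s) * x := by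
      rw [Complex.cpow_add _ _ hxc, Complex.cpow_one]
    push_cast
    have h4 : ((x:ℂ) ^ (-s+1)) / (-s+1) * ((x:ℂ))⁻¹ = (x:ℂ) ^ (-s) / (-s+1) := by
      rw [hsplit]
      field_simp
    rw [h4, add_sub_cancel_right, Complex.cpow_neg, div_eq_mul_inv, mul_comm]
  have hint : IntervalIntegrable (fun x : ℝ => (Real.log x : ℂ) / (x:ℂ) ^ s)
      MeasureTheory.volume t (t^2) := by
    apply ContinuousOn.intervalIntegrable
    rw [Set.uIcc_of_le htt]
    apply ContinuousOn.div
    · exact Complex.continuous_ofReal.comp_continuousOn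
        (Real.continuousOn_log.mono (fun x hx => ne_of_gt (lt_of_lt_of_le ht0 hx.1)))
    · intro x hx
      exact (Complex.continuousAt_ofReal_cpow_const x s
        (Or.inr (ne_of_gt (lt_of_lt_of_le ht0 hx.1)))).continuousWithinAt
    · intro x hx
      simp only [ne_eq, Complex.cpow_eq_zero_iff, not_and_or, not_not]
      exact Or.inl (Complex.ofReal_ne_zero.2 (ne_of_gt (lt_of_lt_of_le ht0 hx.1)))
  have heval : (∫ x in t..(t ^ 2), (Real.log x : ℂ) / (x : ℂ) ^ s) = F (t^2) - F t :=
    intervalIntegral.integral_eq_sub_of_hasDerivAt hder hint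
  rw [heval]
  -- bound on |F x|
  have habs1 : t ≤ ‖-s+1‖ := by
    have := Complex.abs_im_le_norm (-s+1)
    rw [him] at this
    rw [abs_neg, abs_of_pos ht0] at this
    exact this
  have habsne : (0:ℝ) < ‖-s+1‖ := lt_of_lt_of_le ht0 habs1
  have key : ∀ x : ℝ, 1 ≤ x →
      ‖F x‖ ≤ x ^ ((1:ℝ)/2) * Real.log x / t + x ^ ((1:ℝ)/2) / t^2 := by
    intro x hx1
    have hx0 : (0:ℝ) < x := lt_of_lt_of_le one_pos hx1
    have hcp : ‖(x:ℂ) ^ (-s+1)‖ = x ^ ((1:ℝ)/2) := by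
      rw [Complex.norm_cpow_eq_rpow_re_of_pos hx0]
      congr 1
      simp [hs]
      norm_num
    have hlog0 : 0 ≤ Real.log x := Real.log_nonneg hx1
    have h1 : ‖F x‖ ≤ ‖(x:ℂ) ^ (-s+1) / (-s+1) * (Real.log x : ℂ)‖
        + ‖((x:ℂ) ^ (-s+1) / (-s+1)) / (-s+1)‖ := by
      rw [hF]
      exact norm_sub_le _ _
    have e2 : ‖(x:ℂ) ^ (-s+1) / (-s+1) * (Real.log x : ℂ)‖
        = x ^ ((1:ℝ)/2) * Real.log x / ‖-s+1‖ := by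
      rw [norm_mul, norm_div, hcp, Complex.norm_real, Real.norm_eq_abs, _root_.abs_of_nonneg hlog0]
      ring
    have e3 : ‖((x:ℂ) ^ (-s+1) / (-s+1)) / (-s+1)‖
        = x ^ ((1:ℝ)/2) / (‖-s+1‖)^2 := by
      rw [norm_div, norm_div, hcp]
      ring
    rw [e2, e3] at h1
    refine h1.trans (add_le_add ?_ ?_)
    · apply div_le_div_of_nonneg_left _ ht0 habs1
      positivity
    · apply div_le_div_of_nonneg_left _ (by positivity) _
      · positivity
      · nlinarith
  have hx2 : ((t:ℝ)^2) ^ ((1:ℝ)/2) = t := by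
    rw [← Real.rpow_natCast t 2, ← Real.rpow_mul ht0.le]
    norm_num
  have hlog2 : Real.log (t^2) = 2 * Real.log t := by
    rw [Real.log_pow]; push_cast; ring
  have k1 := key (t^2) (by nlinarith)
  have k2 := key t ht1.le
  rw [hx2, hlog2] at k1
  have hFb : ‖F (t^2) - F t‖ ≤
      (t * (2 * Real.log t) / t + t / t^2) + (t ^ ((1:ℝ)/2) * Real.log t / t + t ^ ((1:ℝ)/2) / t^2) :=
    (norm_sub_le _ _).trans (add_le_add k1 k2)
  refine hFb.trans ?_
  have hee2 : Real.exp 2 = Real.exp 1 * Real.exp 1 := by rw [← Real.exp_add]; norm_num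
  have aux := aux_num t (by rw [← hee2]; exact ht)
  have term0 : t * (2 * Real.log t) / t = 2 * Real.log t := by field_simp
  rw [term0] at hFb
  linarith
end
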